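/- The repetition system satisfies condition (A1^s) at every level s: for all scalar sequences c, d with M_s^c ≠ ∅ and M_s^d ≠ ∅, and for all f ∈ M_s^c and h ∈ M_s^d, there exists r ∈ M_s^{c+d} with ‖r‖_s ≤ ‖f‖_s + ‖h‖_s. -/

import Mathlib

noncomputable section

open Set

/-- The space `X_s = {f : ∑ i, a_{i,s}² ⟪f,e_i⟩² < ∞}` (as a subset of `X₀`). -/
def Xs {X₀ : Type*} [NormedAddCommGroup X₀] [InnerProductSpace ℝ X₀]
    (e : ℕ → X₀) (a : ℕ → ℕ → ℝ) (s : ℕ) : Set X₀ :=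
  {f | Summable fun i => (a i s * (inner ℝ f (e i) : ℝ)) ^ 2}

/-- The inner product `⟪f,h⟫_s = ∑ i, a_{i,s}² ⟪f,e_i⟩₀ ⟪h,e_i⟩₀`. -/
def innerS {X₀ : Type*} [NormedAddCommGroup X₀] [InnerProductSpace ℝ X₀]
    (e : ℕ → X₀) (a : ℕ → ℕ → ℝ) (s : ℕ) (f h : X₀) : ℝ :=
  ∑' i, (a i s) ^ 2 * (inner ℝ f (e i) : ℝ) * (inner ℝ h (e i) : ℝ)

/-- The norm `‖f‖_s = (∑ i, a_{i,s}² ⟪f,e_i⟩₀²)^(1/2)`. -/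
def normS {X₀ : Type*} [NormedAddCommGroup X₀] [InnerProductSpace ℝ X₀]
    (e : ℕ → X₀) (a : ℕ → ℕ → ℝ) (s : ℕ) (f : X₀) : ℝ :=
  Real.sqrt (∑' i, (a i s * (inner ℝ f (e i) : ℝ)) ^ 2)

/-- `M_s^c`: the set of `f ∈ X_s` with `|c i| ≤ |g i (f)| = |t i * ⟪f, e (σ i)⟫₀|`. -/
def MSetS {X₀ : Type*} [NormedAddCommGroup X₀] [InnerProductSpace ℝ X₀]
    (e : ℕ → X₀) (a : ℕ → ℕ → ℝ) (σ : ℕ → ℕ) (t : ℕ → ℝ) (s : ℕ) (c : ℕ → ℝ) :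
    Set X₀ :=
  {f | f ∈ Xs e a s ∧ ∀ i, |c i| ≤ |t i * (inner ℝ f (e (σ i)) : ℝ)|}

lemma abs_add_same_sign (x y : ℝ) (h : 0 ≤ x * y) : |x + y| = |x| + |y| := by
  have hxy : |x| * |y| = x * y := by rw [← abs_mul, abs_of_nonneg h]
  have h2 : |x + y| ^ 2 = (|x| + |y|) ^ 2 := by
    rw [sq_abs]; ring_nf; nlinarith [hxy, sq_abs x, sq_abs y]
  nlinarith [abs_nonneg (x + y), abs_nonneg x, abs_nonneg y, h2]

lemma abs_mix (x y : ℝ) :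
    |x + (if 0 ≤ x * y then (1 : ℝ) else -1) * y| = |x| + |y| := by
  split_ifs with hxy
  · rw [one_mul]; exact abs_add_same_sign x y hxy
  · have h' : 0 ≤ x * (-y) := by nlinarith [lt_of_not_ge hxy]
    have := abs_add_same_sign x (-y) h'
    simpa [neg_one_mul] using this

lemma norm_rpow_two_eq_sq (u : ℝ) : ‖u‖ ^ (2 : ENNReal).toReal = u ^ 2 := by
  rw [ENNReal.toReal_ofNat, show ((2 : ℝ)) = ((2 : ℕ) : ℝ) by norm_num,
    Real.rpow_natCast, Real.norm_eq_abs, sq_abs]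

lemma mem_lp2_of_sq_summable {x : ℕ → ℝ} (hx : Summable fun j => (x j) ^ 2) :
    Memℓp x 2 := by
  apply memℓp_gen
  simpa only [norm_rpow_two_eq_sq] using hx

lemma lp2_norm_eq_sqrt (x : lp (fun _ : ℕ => ℝ) 2) :
    ‖x‖ = Real.sqrt (∑' j, (x j) ^ 2) := by
  rw [lp.norm_eq_tsum_rpow (by norm_num) x, Real.sqrt_eq_rpow]
  simp only [norm_rpow_two_eq_sq]
  norm_num

theorem repetition_system_A1s
    {X₀ : Type*} [NormedAddCommGroup X₀] [InnerProductSpace ℝ X₀] [CompleteSpace X₀]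
    (e : HilbertBasis ℕ ℝ X₀) (a : ℕ → ℕ → ℝ)
    (ha0 : ∀ i, a i 0 = 1) (ha1 : ∀ i s, 1 ≤ a i s)
    (hamono : ∀ i s, a i s ≤ a i (s + 1))
    (σ : ℕ → ℕ) (t : ℕ → ℝ)
    (hσmono : Monotone σ) (hσsurj : Function.Surjective σ)
    (hσtend : Filter.Tendsto σ Filter.atTop Filter.atTop)
    (ht : ∀ i, t i ≠ 0) :
    ∀ s : ℕ, ∀ c d : ℕ → ℝ,
      (MSetS (⇑e) a σ t s c).Nonempty → (MSetS (⇑e) a σ t s d).Nonempty →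
      ∀ f ∈ MSetS (⇑e) a σ t s c, ∀ h ∈ MSetS (⇑e) a σ t s d,
        ∃ r ∈ MSetS (⇑e) a σ t s (c + d),
          normS (⇑e) a s r ≤ normS (⇑e) a s f + normS (⇑e) a s h := by
  intro s c d _ _ f hf h hh
  obtain ⟨hfX, hfc⟩ := hf
  obtain ⟨hhX, hhd⟩ := hh
  set F : ℕ → ℝ := fun j => (inner ℝ f (e j) : ℝ) with hF
  set H : ℕ → ℝ := fun j => (inner ℝ h (e j) : ℝ) with hH
  have hfX' : Summable fun i => (a i s * F i) ^ 2 := hfX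
  have hhX' : Summable fun i => (a i s * H i) ^ 2 := hhX
  set sg : ℕ → ℝ := fun j => if 0 ≤ F j * H j then 1 else -1 with hsg
  have hsg2 : ∀ j, (sg j) ^ 2 = 1 := by
    intro j; simp only [hsg]; split_ifs <;> norm_num
  set b : ℕ → ℝ := fun j => F j + sg j * H j with hb
  have habs : ∀ j, |b j| = |F j| + |H j| := fun j => abs_mix (F j) (H j)
  -- summability of (a * b)^2
  have hab2 : Summable fun j => (a j s * b j) ^ 2 := by
    apply Summable.of_nonneg_of_le (fun j => sq_nonneg _) (fun j => ?_)
      (((hfX'.add hhX').mul_left 2))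
    have key : (a j s * (sg j * H j)) ^ 2 = (a j s * H j) ^ 2 := by
      rw [mul_pow, mul_pow (sg j), hsg2 j, one_mul, ← mul_pow]
    simp only [hb]
    nlinarith [sq_nonneg (a j s * F j - a j s * (sg j * H j)), key]
  have hb2 : Summable fun j => (b j) ^ 2 := by
    apply Summable.of_nonneg_of_le (fun j => sq_nonneg _) (fun j => ?_) hab2
    have h1 : (1:ℝ) ≤ a j s ^ 2 := one_le_pow₀ (ha1 j s)
    nlinarith [sq_nonneg (b j), h1]
  set rlp : lp (fun _ : ℕ => ℝ) 2 := ⟨b, mem_lp2_of_sq_summable hb2⟩ with hrlp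
  set r : X₀ := e.repr.symm rlp with hr
  have hrcoef : ∀ j, (inner ℝ r (e j) : ℝ) = b j := by
    intro j
    rw [real_inner_comm, ← e.repr_apply_apply]
    simp only [hr, LinearIsometryEquiv.apply_symm_apply]
    rfl
  refine ⟨r, ⟨?_, ?_⟩, ?_⟩
  · show Summable fun i => (a i s * (inner ℝ r (e i) : ℝ)) ^ 2
    simpa only [hrcoef] using hab2
  · intro i
    have h1 := hfc i
    have h2 := hhd i
    calc |(c + d) i| = |c i + d i| := rfl
      _ ≤ |c i| + |d i| := abs_add_le _ _
      _ ≤ |t i * F (σ i)| + |t i * H (σ i)| := add_le_add h1 h2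
      _ = |t i| * (|F (σ i)| + |H (σ i)|) := by rw [abs_mul, abs_mul]; ring
      _ = |t i| * |b (σ i)| := by rw [habs]
      _ = |t i * (inner ℝ r (e (σ i)) : ℝ)| := by rw [hrcoef, abs_mul]
  · -- norm inequality via lp triangle inequality
    set U : lp (fun _ : ℕ => ℝ) 2 :=
      ⟨fun j => a j s * F j, mem_lp2_of_sq_summable hfX'⟩ with hU
    have hV2 : Summable fun j => (a j s * (sg j * H j)) ^ 2 := by
      apply Summable.congr hhX'
      intro j
      have := hsg2 j
      nlinarith
    set V : lp (fun _ : ℕ => ℝ) 2 :=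
      ⟨fun j => a j s * (sg j * H j), mem_lp2_of_sq_summable hV2⟩ with hV
    have hUV : ∀ j, (↑(U + V) : ∀ _ : ℕ, ℝ) j = a j s * b j := by
      intro j
      rw [lp.coeFn_add]
      show a j s * F j + a j s * (sg j * H j) = a j s * b j
      simp only [hb]; ring
    have hnr : normS (⇑e) a s r = ‖U + V‖ := by
      rw [lp2_norm_eq_sqrt, normS]
      congr 1
      apply tsum_congr
      intro j
      rw [hUV j, hrcoef j]
    have hnf : ‖U‖ = normS (⇑e) a s f := by
      rw [lp2_norm_eq_sqrt, normS]
    have hnh : ‖V‖ = normS (⇑e) a s h := by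
      rw [lp2_norm_eq_sqrt, normS]
      congr 1
      apply tsum_congr
      intro j
      show (a j s * (sg j * H j)) ^ 2 = (a j s * H j) ^ 2
      have := hsg2 j
      nlinarith
    rw [hnr, ← hnf, ← hnh]
    exact norm_add_le U V
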